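/- arXiv:1809.01608 — 2 statements merged into one kernel-verified Lean document; each statement's English description precedes it below -/
import Mathlib

section
/- Let A be a Hermitian n×n matrix with spectral decomposition A = U* Λ U (U unitary, Λ = diag{λ_1,...,λ_n} real). Then the unique minimizer of ‖X - A‖_F over positive semidefinite Hermitian X is U* diag{max(λ_1,0),...,max(λ_n,0)} U. -/
open Matrix
open scoped ComplexOrder

noncomputable section

/-- Frobenius norm of a complex matrix. -/
def frobNorm {α : Type*} [Fintype α] (M : Matrix α α ℂ) : ℝ :=
  Real.sqrt (∑ i, ∑ j, ‖M i j‖ ^ 2)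

namespace PsdProjAux

/-- The squared Frobenius norm. -/
def S {n : ℕ} (M : Matrix (Fin n) (Fin n) ℂ) : ℝ :=
  ∑ i, ∑ j, ‖M i j‖ ^ 2

lemma S_nonneg {n : ℕ} (M : Matrix (Fin n) (Fin n) ℂ) : 0 ≤ S M :=
  Finset.sum_nonneg fun _ _ => Finset.sum_nonneg fun _ _ => by positivity

lemma frobNorm_eq {n : ℕ} (M : Matrix (Fin n) (Fin n) ℂ) :
    frobNorm M = Real.sqrt (S M) := rfl

lemma S_eq_trace {n : ℕ} (M : Matrix (Fin n) (Fin n) ℂ) :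
    S M = ((Mᴴ * M).trace).re := by
  have : (Mᴴ * M).trace = ∑ j, ∑ i, (Complex.normSq (M i j) : ℂ) := by
    simp only [Matrix.trace, Matrix.diag, Matrix.mul_apply, Matrix.conjTranspose_apply]
    refine Finset.sum_congr rfl fun j _ => Finset.sum_congr rfl fun i _ => ?_
    rw [Complex.normSq_eq_conj_mul_self]
    rfl
  rw [this]
  simp only [Complex.re_sum, Complex.ofReal_re]
  rw [S, Finset.sum_comm]
  refine Finset.sum_congr rfl fun j _ => Finset.sum_congr rfl fun i _ => ?_
  rw [Complex.sq_norm]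

lemma S_conj {n : ℕ} (U : Matrix (Fin n) (Fin n) ℂ)
    (hU₁ : U * Uᴴ = 1) (M : Matrix (Fin n) (Fin n) ℂ) :
    S (Uᴴ * M * U) = S M := by
  rw [S_eq_trace, S_eq_trace]
  congr 1
  have h1 : (Uᴴ * M * U)ᴴ * (Uᴴ * M * U) = Uᴴ * (Mᴴ * M) * U := by
    simp only [Matrix.conjTranspose_mul, Matrix.conjTranspose_conjTranspose]
    have e1 : Uᴴ * (Mᴴ * U) * (Uᴴ * M * U) = Uᴴ * Mᴴ * (U * Uᴴ) * (M * U) := by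
      noncomm_ring
    rw [e1, hU₁]
    noncomm_ring
  rw [h1, Matrix.trace_mul_cycle, ← Matrix.mul_assoc, hU₁, Matrix.one_mul]

lemma real_key {r l : ℝ} (hr : 0 ≤ r) : (max l 0 - l) ^ 2 ≤ (r - l) ^ 2 := by
  rcases le_or_gt l 0 with h | h
  · rw [max_eq_right h]; nlinarith
  · rw [max_eq_left h.le]; nlinarith

lemma real_key_eq {r l : ℝ} (hr : 0 ≤ r) (h : (r - l) ^ 2 = (max l 0 - l) ^ 2) :
    r = max l 0 := by
  rcases le_or_gt l 0 with hl | hl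
  · rw [max_eq_right hl] at h ⊢
    nlinarith
  · rw [max_eq_left hl.le] at h ⊢
    nlinarith

lemma diag_real_nonneg {n : ℕ} {Y : Matrix (Fin n) (Fin n) ℂ} (hY : Y.PosSemidef)
    (i : Fin n) : Y i i = ((Y i i).re : ℂ) ∧ 0 ≤ (Y i i).re := by
  have h := hY.dotProduct_mulVec_nonneg (Pi.single i 1)
  have hval : dotProduct (star (Pi.single i 1)) (Y *ᵥ (Pi.single i 1)) = Y i i := by
    simp [dotProduct, Matrix.mulVec, Pi.single_apply, Finset.sum_ite_eq,
      Finset.mul_sum]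
  rw [hval] at h
  obtain ⟨hre, him⟩ := Complex.nonneg_iff.mp h
  exact ⟨Complex.ext (by simp) (by simp [← him]), hre⟩

end PsdProjAux

open PsdProjAux in
/-- let A be Hermitian with spectral decomposition A = U* Λ U
(U unitary, Λ = diag{λ_1,...,λ_n} real). Then the unique minimizer of ‖X - A‖_F
over positive semidefinite (Hermitian) X is U* diag{max(λ_i,0)} U. -/
theorem psd_projection_eq_truncated_eigenvalues
    (n : ℕ) (A U : Matrix (Fin n) (Fin n) ℂ) (lam : Fin n → ℝ)
    (hU₁ : U * Uᴴ = 1) (hU₂ : Uᴴ * U = 1)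
    (hA : A = Uᴴ * Matrix.diagonal (fun i => ((lam i : ℝ) : ℂ)) * U) :
    (Uᴴ * Matrix.diagonal (fun i => ((max (lam i) 0 : ℝ) : ℂ)) * U).PosSemidef ∧
    (∀ X : Matrix (Fin n) (Fin n) ℂ, X.PosSemidef →
      frobNorm ((Uᴴ * Matrix.diagonal (fun i => ((max (lam i) 0 : ℝ) : ℂ)) * U) - A) ≤
        frobNorm (X - A)) ∧
    (∀ X : Matrix (Fin n) (Fin n) ℂ, X.PosSemidef →
      frobNorm (X - A) =
        frobNorm ((Uᴴ * Matrix.diagonal (fun i => ((max (lam i) 0 : ℝ) : ℂ)) * U) - A) →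
      X = Uᴴ * Matrix.diagonal (fun i => ((max (lam i) 0 : ℝ) : ℂ)) * U) := by
  -- notation
  set Λ : Matrix (Fin n) (Fin n) ℂ := Matrix.diagonal (fun i => ((lam i : ℝ) : ℂ)) with hΛ
  set D : Matrix (Fin n) (Fin n) ℂ :=
    Matrix.diagonal (fun i => ((max (lam i) 0 : ℝ) : ℂ)) with hD
  set B : Matrix (Fin n) (Fin n) ℂ := Uᴴ * D * U with hB
  -- B is PSD
  have hDpsd : D.PosSemidef := by
    refine Matrix.posSemidef_diagonal_iff.mpr fun i => ?_
    rw [Complex.nonneg_iff]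
    constructor <;> simp [le_max_right]
  have hBpsd : B.PosSemidef := by
    have := hDpsd.conjTranspose_mul_mul_same U
    simpa [hB] using this
  -- value at the minimizer
  have hSDΛ : S (D - Λ) = ∑ i, (max (lam i) 0 - lam i) ^ 2 := by
    have hDiag : D - Λ =
        Matrix.diagonal (fun i => ((max (lam i) 0 - lam i : ℝ) : ℂ)) := by
      rw [hD, hΛ, Matrix.diagonal_sub]
      funext i; push_cast; ring_nf
    rw [hDiag]
    unfold S
    refine Finset.sum_congr rfl fun i _ => ?_
    rw [Finset.sum_eq_single i]
    · rw [Matrix.diagonal_apply_eq, Complex.norm_real, Real.norm_eq_abs, sq_abs]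
    · intro j _ hj
      simp [Matrix.diagonal_apply_ne' _ hj]
    · simp
  -- B - A = Uᴴ (D - Λ) U
  have hBA : B - A = Uᴴ * (D - Λ) * U := by
    rw [hB, hA]
    noncomm_ring
  have hSBA : S (B - A) = ∑ i, (max (lam i) 0 - lam i) ^ 2 := by
    rw [hBA, S_conj U hU₁, hSDΛ]
  -- key inequality for PSD Y : rows
  have rowbound : ∀ (Y : Matrix (Fin n) (Fin n) ℂ), Y.PosSemidef → ∀ i,
      (max (lam i) 0 - lam i) ^ 2 ≤ ∑ j, ‖(Y - Λ) i j‖ ^ 2 := by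
    intro Y hY i
    obtain ⟨hreal, hnn⟩ := diag_real_nonneg hY i
    have hdiagterm : ‖(Y - Λ) i i‖ ^ 2 = ((Y i i).re - lam i) ^ 2 := by
      have : (Y - Λ) i i = (((Y i i).re - lam i : ℝ) : ℂ) := by
        rw [Matrix.sub_apply, hΛ, Matrix.diagonal_apply_eq]
        conv_lhs => rw [hreal]
        push_cast; ring
      rw [this, Complex.norm_real, Real.norm_eq_abs, sq_abs]
    calc (max (lam i) 0 - lam i) ^ 2 ≤ ((Y i i).re - lam i) ^ 2 := real_key hnn
    _ = ‖(Y - Λ) i i‖ ^ 2 := hdiagterm.symm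
    _ ≤ ∑ j, ‖(Y - Λ) i j‖ ^ 2 := by
        exact Finset.single_le_sum (f := fun j => ‖(Y - Λ) i j‖ ^ 2)
          (fun j _ => by positivity) (Finset.mem_univ i)
  have keyineq : ∀ (Y : Matrix (Fin n) (Fin n) ℂ), Y.PosSemidef →
      (∑ i, (max (lam i) 0 - lam i) ^ 2) ≤ S (Y - Λ) := by
    intro Y hY
    exact Finset.sum_le_sum fun i _ => rowbound Y hY i
  -- relating X to Y
  have hXY : ∀ X : Matrix (Fin n) (Fin n) ℂ,
      X - A = Uᴴ * ((U * X * Uᴴ) - Λ) * U := by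
    intro X
    have : Uᴴ * (U * X * Uᴴ) * U = X := by
      calc Uᴴ * (U * X * Uᴴ) * U = (Uᴴ * U) * X * (Uᴴ * U) := by noncomm_ring
      _ = X := by rw [hU₂]; simp
    rw [hA]
    rw [Matrix.mul_sub, Matrix.sub_mul, this]
  have hSX : ∀ X : Matrix (Fin n) (Fin n) ℂ,
      S (X - A) = S ((U * X * Uᴴ) - Λ) := by
    intro X
    rw [hXY X, S_conj U hU₁]
  have hYpsd : ∀ X : Matrix (Fin n) (Fin n) ℂ, X.PosSemidef →
      (U * X * Uᴴ).PosSemidef := fun X hX => hX.mul_mul_conjTranspose_same U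
  refine ⟨hBpsd, ?_, ?_⟩
  · -- minimality
    intro X hX
    rw [frobNorm_eq, frobNorm_eq]
    apply Real.sqrt_le_sqrt
    rw [hSBA, hSX X]
    exact keyineq _ (hYpsd X hX)
  · -- uniqueness
    intro X hX heq
    set Y := U * X * Uᴴ with hYdef
    have hYps : Y.PosSemidef := hYpsd X hX
    have hSeq : S (Y - Λ) = ∑ i, (max (lam i) 0 - lam i) ^ 2 := by
      have h1 : Real.sqrt (S (X - A)) = Real.sqrt (S (B - A)) := heq
      have h2 : S (X - A) = S (B - A) := by
        have h3 := congrArg (fun t => t ^ 2) h1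
        simpa [Real.sq_sqrt (S_nonneg _)] using h3
      rw [← hSX X, h2, hSBA]
    -- each row achieves equality
    have hrow : ∀ i, (∑ j, ‖(Y - Λ) i j‖ ^ 2)
        = (max (lam i) 0 - lam i) ^ 2 := by
      intro i
      by_contra hne
      have hlt : (max (lam i) 0 - lam i) ^ 2 < ∑ j, ‖(Y - Λ) i j‖ ^ 2 :=
        lt_of_le_of_ne (rowbound Y hYps i) (Ne.symm hne)
      have : (∑ i, (max (lam i) 0 - lam i) ^ 2) < S (Y - Λ) := by
        unfold S
        exact Finset.sum_lt_sum (fun j _ => rowbound Y hYps j) ⟨i, Finset.mem_univ i, hlt⟩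
      rw [hSeq] at this
      exact lt_irrefl _ this
    -- deduce Y = D
    have hYD : Y = D := by
      ext i j
      obtain ⟨hreal, hnn⟩ := diag_real_nonneg hYps i
      have hdiagterm : ‖(Y - Λ) i i‖ ^ 2 = ((Y i i).re - lam i) ^ 2 := by
        have : (Y - Λ) i i = (((Y i i).re - lam i : ℝ) : ℂ) := by
          rw [Matrix.sub_apply, hΛ, Matrix.diagonal_apply_eq]
          conv_lhs => rw [hreal]
          push_cast; ring
        rw [this, Complex.norm_real, Real.norm_eq_abs, sq_abs]
      have hsplit : ∑ k, ‖(Y - Λ) i k‖ ^ 2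
          = ‖(Y - Λ) i i‖ ^ 2
            + ∑ k ∈ Finset.univ.erase i, ‖(Y - Λ) i k‖ ^ 2 := by
        rw [← Finset.sum_erase_add _ _ (Finset.mem_univ i)]; ring
      have hoffnn : 0 ≤ ∑ k ∈ Finset.univ.erase i, ‖(Y - Λ) i k‖ ^ 2 :=
        Finset.sum_nonneg fun _ _ => by positivity
      have hdge : (max (lam i) 0 - lam i) ^ 2 ≤ ‖(Y - Λ) i i‖ ^ 2 := by
        rw [hdiagterm]; exact real_key hnn
      have hoff0 : ∑ k ∈ Finset.univ.erase i, ‖(Y - Λ) i k‖ ^ 2 = 0 := by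
        have := hrow i
        rw [hsplit] at this
        linarith
      have hdeq : ‖(Y - Λ) i i‖ ^ 2 = (max (lam i) 0 - lam i) ^ 2 := by
        have := hrow i
        rw [hsplit, hoff0] at this
        linarith
      by_cases hij : i = j
      · subst hij
        have : (Y i i).re = max (lam i) 0 := by
          apply real_key_eq hnn
          rw [← hdiagterm, hdeq]
        rw [hD, Matrix.diagonal_apply_eq, hreal, this]
      · have hk : ‖(Y - Λ) i j‖ ^ 2 = 0 := by
          have hmem : j ∈ Finset.univ.erase i := Finset.mem_erase.mpr ⟨fun h => hij h.symm, Finset.mem_univ j⟩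
          have := (Finset.sum_eq_zero_iff_of_nonneg (fun k _ => by positivity)).mp hoff0 j hmem
          exact this
        have hz : (Y - Λ) i j = 0 := by
          have := pow_eq_zero_iff (n := 2) (by norm_num) |>.mp hk
          exact norm_eq_zero.mp this
        have : Y i j = 0 := by
          have hΛz : Λ i j = 0 := by
            rw [hΛ]; exact Matrix.diagonal_apply_ne _ hij
          have := hz
          rw [Matrix.sub_apply, hΛz, sub_zero] at this
          exact this
        rw [this, hD, Matrix.diagonal_apply_ne _ hij]
    -- conclude X = B
    have : Uᴴ * Y * U = X := by
      calc Uᴴ * (U * X * Uᴴ) * U = (Uᴴ * U) * X * (Uᴴ * U) := by noncomm_ring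
      _ = X := by rw [hU₂]; simp
    rw [← this, hYD]
end
end

section
/- The Frobenius-norm projection of a symmetric block-circulant matrix onto the cone of positive semidefinite matrices is again block-circulant. Concretely, if C = F* diag{C(ζ^0),...,C(ζ^{N-1})} F, then the PSD projection of C equals F* diag{P^+(C(ζ^0)),...,P^+(C(ζ^{N-1}))} F, where P^+ denotes the projection of a Hermitian matrix onto the PSD cone obtained by truncating negative eigenvalues to zero. -/
open Matrix Complex Finset
open scoped ComplexOrder

noncomputable section

/-- N-th root of unity ζ = e^{2πi/N}. -/
def zetaN (N : ℕ) : ℂ := Complex.exp (2 * Real.pi * Complex.I / N)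

/-- Block-circulant matrix with m×m blocks: the (j,k) block is C_{(j-k) mod N}. -/
def blockCirc (N m : ℕ) (C : Fin N → Matrix (Fin m) (Fin m) ℂ) :
    Matrix (Fin N × Fin m) (Fin N × Fin m) ℂ :=
  fun p q => C (p.1 - q.1) p.2 q.2

/-- Symbol Φ of the block-circulant matrix evaluated at ζ^j:
Φ(ζ^j) = Σ_{k=0}^{N-1} C_k ζ^{-jk}. -/
def symbolAt (N m : ℕ) (C : Fin N → Matrix (Fin m) (Fin m) ℂ) (j : Fin N) :
    Matrix (Fin m) (Fin m) ℂ :=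
  ∑ k : Fin N, (zetaN N ^ (-((j.val * k.val : ℕ) : ℤ))) • C k

/-- Fourier block-matrix, (j,k) block equal to (1/√N) ζ^{-jk} I_m. -/
def fourierBlk (N m : ℕ) : Matrix (Fin N × Fin m) (Fin N × Fin m) ℂ :=
  fun p q =>
    if p.2 = q.2 then (1 / (Real.sqrt N : ℂ)) * zetaN N ^ (-((p.1.val * q.1.val : ℕ) : ℤ))
    else 0

/-- Block-diagonal matrix with diagonal blocks S_0, ..., S_{N-1}. -/
def blockDiag (N m : ℕ) (S : Fin N → Matrix (Fin m) (Fin m) ℂ) :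
    Matrix (Fin N × Fin m) (Fin N × Fin m) ℂ :=
  fun p q => if p.1 = q.1 then S p.1 p.2 q.2 else 0


/-- A matrix is block-circulant if its (j,k) block depends only on (j-k) mod N. -/
def IsBlockCircMat (N m : ℕ) (A : Matrix (Fin N × Fin m) (Fin N × Fin m) ℂ) : Prop :=
  ∃ C : Fin N → Matrix (Fin m) (Fin m) ℂ, A = blockCirc N m C

/-! ### Auxiliary lemmas -/

lemma zetaN_prim (N : ℕ) (hN : 0 < N) : IsPrimitiveRoot (zetaN N) N :=
  Complex.isPrimitiveRoot_exp N hN.ne'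

lemma zetaN_ne_zero (N : ℕ) : zetaN N ≠ 0 := Complex.exp_ne_zero _

lemma zetaN_pow_N (N : ℕ) (hN : 0 < N) : zetaN N ^ (N : ℤ) = 1 := by
  exact_mod_cast (zetaN_prim N hN).pow_eq_one

lemma zetaN_zpow_modEq (N : ℕ) (hN : 0 < N) {x y : ℤ} (h : x ≡ y [ZMOD N]) :
    zetaN N ^ x = zetaN N ^ y := by
  obtain ⟨t, ht⟩ := h.dvd
  have hxy : y = x + N * t := by linarith
  rw [hxy, zpow_add₀ (zetaN_ne_zero N), _root_.zpow_mul, zetaN_pow_N N hN,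
    _root_.one_zpow, mul_one]

lemma star_zetaN_zpow (N : ℕ) (x : ℤ) : star (zetaN N ^ x) = zetaN N ^ (-x) := by
  have h : star (zetaN N) = (zetaN N)⁻¹ := by
    rw [zetaN]
    rw [show star (Complex.exp (2 * Real.pi * Complex.I / N)) =
      Complex.exp (star (2 * (Real.pi:ℂ) * Complex.I / N)) from (Complex.exp_conj _).symm]
    rw [← Complex.exp_neg]
    congr 1
    simp [div_eq_mul_inv]
  rw [star_zpow₀, h, _root_.inv_zpow, ← _root_.zpow_neg]

lemma fin_sub_modEq (N : ℕ) (a b : Fin N) :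
    (((a - b : Fin N).val : ℤ)) ≡ (a.val : ℤ) - b.val [ZMOD N] := by
  have h : (a - b : Fin N).val = (N - b.val + a.val) % N := by
    rw [Fin.sub_def]
  have hb : b.val ≤ N := le_of_lt b.isLt
  rw [Int.ModEq, h]
  push_cast [Nat.cast_sub hb]
  rw [Int.emod_emod_of_dvd _ dvd_rfl]
  have h2 : (N:ℤ) - b.val + a.val = (a.val - b.val) + N := by ring
  rw [h2]
  simp [Int.add_mul_emod_self_left]

lemma sum_zpow_eq_zero (N : ℕ) (hN : 0 < N) (c : ℤ) (hc : ¬ ((N : ℤ) ∣ c)) :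
    ∑ j : Fin N, zetaN N ^ (c * j.val) = 0 := by
  have hne : zetaN N ^ c ≠ 1 := by
    intro h
    exact hc (((zetaN_prim N hN).zpow_eq_one_iff_dvd c).mp h)
  have h1 : ∀ j : Fin N, zetaN N ^ (c * (j.val : ℤ)) = (zetaN N ^ c) ^ (j.val : ℕ) := by
    intro j
    rw [_root_.zpow_mul, ← zpow_natCast (zetaN N ^ c)]
  rw [Finset.sum_congr rfl (fun j _ => h1 j)]
  rw [Fin.sum_univ_eq_sum_range (fun j => (zetaN N ^ c) ^ j)]
  rw [geom_sum_eq hne]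
  have h2 : (zetaN N ^ c) ^ N = 1 := by
    rw [← zpow_natCast (zetaN N ^ c), ← _root_.zpow_mul, mul_comm, _root_.zpow_mul,
      zetaN_pow_N N hN, _root_.one_zpow]
  rw [h2]
  simp

lemma fourier_mul_conjTranspose (N m : ℕ) (hN : 0 < N) :
    fourierBlk N m * (fourierBlk N m)ᴴ = 1 := by
  have hsq : (1 / (Real.sqrt N : ℂ)) * (1 / (Real.sqrt N : ℂ)) = 1 / (N : ℂ) := by
    rw [div_mul_div_comm, one_mul, ← Complex.ofReal_mul, Real.mul_self_sqrt (Nat.cast_nonneg N)]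
    norm_num
  ext ⟨a, i⟩ ⟨b, l⟩
  rw [mul_apply, Fintype.sum_prod_type]
  simp only [conjTranspose_apply, fourierBlk, apply_ite (star : ℂ → ℂ), star_zero, star_mul',
    star_zetaN_zpow, ite_mul, zero_mul, mul_ite, mul_zero]
  have hrw : ∀ x : Fin N, (∑ x_1 : Fin m,
      if l = x_1 then
        if i = x_1 then 1 / (Real.sqrt N : ℂ) * zetaN N ^ (-((a.val * x.val : ℕ) : ℤ)) *
          (star (1 / (Real.sqrt N : ℂ)) * zetaN N ^ (- -((b.val * x.val : ℕ) : ℤ))) else 0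
      else 0) =
      if i = l then (1 / (N : ℂ)) * zetaN N ^ (((b.val : ℤ) - a.val) * x.val) else 0 := by
    intro x
    rw [Finset.sum_ite_eq]
    simp only [Finset.mem_univ, if_true]
    by_cases hil : i = l
    · rw [if_pos hil, if_pos hil]
      have hstar : star (1 / (Real.sqrt N : ℂ)) = 1 / (Real.sqrt N : ℂ) := by simp
      rw [hstar, neg_neg]
      rw [show (1 / (Real.sqrt N : ℂ) * zetaN N ^ (-((a.val * x.val : ℕ) : ℤ)) *
          (1 / (Real.sqrt N : ℂ) * zetaN N ^ (((b.val * x.val : ℕ) : ℤ))))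
        = (1 / (Real.sqrt N : ℂ) * (1 / (Real.sqrt N : ℂ))) *
          (zetaN N ^ (-((a.val * x.val : ℕ) : ℤ)) * zetaN N ^ (((b.val * x.val : ℕ) : ℤ))) from by ring]
      rw [hsq, ← zpow_add₀ (zetaN_ne_zero N)]
      congr 2
      push_cast
      ring
    · rw [if_neg hil, if_neg hil]
  rw [Finset.sum_congr rfl (fun x _ => hrw x)]
  by_cases hil : i = l
  · simp only [if_pos hil]
    by_cases hab : a = b
    · subst hab; subst hil
      have hone : ∀ x : Fin N, (1 / (N : ℂ)) * zetaN N ^ (((a.val : ℤ) - a.val) * x.val) = 1 / N := by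
        intro x; simp
      rw [Finset.sum_congr rfl (fun x _ => hone x), Finset.sum_const, Finset.card_univ,
        Fintype.card_fin, one_apply_eq]
      have hNC : ((N:ℕ):ℂ) ≠ 0 := by exact_mod_cast Nat.cast_ne_zero.mpr hN.ne'
      rw [nsmul_eq_mul]
      field_simp
    · rw [← Finset.mul_sum, sum_zpow_eq_zero N hN _ ?_, mul_zero]
      · rw [one_apply_ne ?_]
        simp [Prod.ext_iff, hab]
      · intro hdvd
        have hv : a.val ≠ b.val := fun h => hab (Fin.ext h)
        have h1 : (b.val : ℤ) - a.val ≠ 0 := by omega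
        have h2 : |(b.val : ℤ) - a.val| < N := by
          have := a.isLt; have := b.isLt
          rw [abs_sub_lt_iff]; omega
        have := Int.le_of_dvd (abs_pos.mpr h1) ((dvd_abs _ _).mpr hdvd)
        omega
  · simp only [if_neg hil, Finset.sum_const_zero]
    rw [one_apply_ne ?_]
    simp [Prod.ext_iff, hil]

lemma conj_entry (N m : ℕ) (T : Fin N → Matrix (Fin m) (Fin m) ℂ)
    (a b : Fin N) (i l : Fin m) :
    ((fourierBlk N m)ᴴ * blockDiag N m T * fourierBlk N m) (a, i) (b, l)
      = (1 / (N : ℂ)) * ∑ j : Fin N,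
          zetaN N ^ (((a.val : ℤ) - b.val) * j.val) * T j i l := by
  have hsq : (1 / (Real.sqrt N : ℂ)) * (1 / (Real.sqrt N : ℂ)) = 1 / (N : ℂ) := by
    rw [div_mul_div_comm, one_mul, ← Complex.ofReal_mul, Real.mul_self_sqrt (Nat.cast_nonneg N)]
    norm_num
  rw [mul_apply, Fintype.sum_prod_type]
  have hcol : ∀ (j : Fin N) (r : Fin m),
      ((fourierBlk N m)ᴴ * blockDiag N m T) (a, i) (j, r)
        = (1 / (Real.sqrt N : ℂ)) * zetaN N ^ ((j.val * a.val : ℕ) : ℤ) * T j i r := by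
    intro j r
    rw [mul_apply, Fintype.sum_prod_type]
    simp only [conjTranspose_apply, fourierBlk, apply_ite (star : ℂ → ℂ),
      star_zero, star_mul', star_zetaN_zpow, ite_mul, zero_mul, mul_ite, mul_zero,
      _root_.blockDiag]
    have hstar : star (1 / (Real.sqrt N : ℂ)) = 1 / (Real.sqrt N : ℂ) := by simp
    simp [Finset.sum_ite_eq', hstar]
  rw [Finset.sum_congr rfl (fun j _ => Finset.sum_congr rfl (fun r _ => by
    rw [hcol j r]))]
  simp only [fourierBlk, mul_ite, mul_zero]
  simp only [Finset.sum_ite_eq', Finset.mem_univ, if_true]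
  rw [Finset.mul_sum]
  refine Finset.sum_congr rfl (fun j _ => ?_)
  rw [show (1 / (Real.sqrt N : ℂ)) * zetaN N ^ ((j.val * a.val : ℕ) : ℤ) * T j i l *
      ((1 / (Real.sqrt N : ℂ)) * zetaN N ^ (-((j.val * b.val : ℕ) : ℤ)))
    = ((1 / (Real.sqrt N : ℂ)) * (1 / (Real.sqrt N : ℂ))) *
      (zetaN N ^ ((j.val * a.val : ℕ) : ℤ) * zetaN N ^ (-((j.val * b.val : ℕ) : ℤ))) * T j i l
    from by ring]
  rw [hsq, ← zpow_add₀ (zetaN_ne_zero N)]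
  rw [show ((j.val * a.val : ℕ) : ℤ) + -((j.val * b.val : ℕ) : ℤ)
    = ((a.val : ℤ) - b.val) * j.val from by push_cast; ring]
  ring

lemma blockDiag_mul (N m : ℕ) (S T : Fin N → Matrix (Fin m) (Fin m) ℂ) :
    blockDiag N m S * blockDiag N m T = blockDiag N m (fun k => S k * T k) := by
  ext ⟨a, i⟩ ⟨b, l⟩
  rw [mul_apply, Fintype.sum_prod_type]
  simp only [_root_.blockDiag, ite_mul, zero_mul, mul_ite, mul_zero]
  by_cases hab : a = b
  · subst hab
    simp [Finset.sum_ite_eq', mul_apply]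
  · simp [Finset.sum_ite_eq', hab, mul_apply]

lemma blockDiag_conjTranspose (N m : ℕ) (S : Fin N → Matrix (Fin m) (Fin m) ℂ) :
    (blockDiag N m S)ᴴ = blockDiag N m (fun k => (S k)ᴴ) := by
  ext ⟨a, i⟩ ⟨b, l⟩
  simp only [conjTranspose_apply, _root_.blockDiag, apply_ite (star : ℂ → ℂ), star_zero]
  by_cases hab : a = b
  · subst hab; simp
  · simp [hab, Ne.symm hab]

lemma blockDiag_sub (N m : ℕ) (S T : Fin N → Matrix (Fin m) (Fin m) ℂ) :
    blockDiag N m S - blockDiag N m T = blockDiag N m (fun k => S k - T k) := by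
  ext ⟨a, i⟩ ⟨b, l⟩
  simp only [Matrix.sub_apply, _root_.blockDiag]
  by_cases hab : a = b
  · subst hab; simp
  · simp [hab]

/-- General sandwich multiplication. -/
lemma sandwich_mul_general {α : Type*} [Fintype α] [DecidableEq α]
    (F D₁ D₂ : Matrix α α ℂ) (hFF : F * Fᴴ = 1) :
    (Fᴴ * D₁ * F) * (Fᴴ * D₂ * F) = Fᴴ * (D₁ * D₂) * F := by
  have h : F * (Fᴴ * (D₂ * F)) = D₂ * F := by
    rw [← Matrix.mul_assoc, hFF, Matrix.one_mul]
  simp only [Matrix.mul_assoc, h]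

/-- The sandwich `Fᴴ · blockDiag(Vᴴ diag(μ) V) · F`. -/
def sw (N m : ℕ) (V : Fin N → Matrix (Fin m) (Fin m) ℂ) (μ : Fin N → Fin m → ℝ) :
    Matrix (Fin N × Fin m) (Fin N × Fin m) ℂ :=
  (fourierBlk N m)ᴴ *
    blockDiag N m (fun k => (V k)ᴴ * Matrix.diagonal (fun i => ((μ k i : ℝ) : ℂ)) * V k) *
    fourierBlk N m

lemma sw_sub (N m : ℕ) (V : Fin N → Matrix (Fin m) (Fin m) ℂ) (μ ν : Fin N → Fin m → ℝ) :
    sw N m V μ - sw N m V ν = sw N m V (fun k i => μ k i - ν k i) := by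
  unfold sw
  rw [← sub_mul, ← mul_sub, blockDiag_sub]
  rw [show (fun k => (V k)ᴴ * Matrix.diagonal (fun i => ((μ k i : ℝ) : ℂ)) * V k
        - (V k)ᴴ * Matrix.diagonal (fun i => ((ν k i : ℝ) : ℂ)) * V k)
      = (fun k => (V k)ᴴ * Matrix.diagonal (fun i => (((fun k i => μ k i - ν k i) k i : ℝ) : ℂ)) * V k)
    from funext fun k => by
      rw [← sub_mul, ← mul_sub, Matrix.diagonal_sub]
      rw [show (fun i => ((μ k i : ℝ) : ℂ) - ((ν k i : ℝ) : ℂ))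
        = fun i => (((μ k i - ν k i : ℝ)) : ℂ) from funext fun i => by push_cast; ring]]

lemma sw_mul (N m : ℕ) (hN : 0 < N) (V : Fin N → Matrix (Fin m) (Fin m) ℂ)
    (hV₁ : ∀ k, V k * (V k)ᴴ = 1) (μ ν : Fin N → Fin m → ℝ) :
    sw N m V μ * sw N m V ν = sw N m V (fun k i => μ k i * ν k i) := by
  unfold sw
  rw [sandwich_mul_general _ _ _ (fourier_mul_conjTranspose N m hN), blockDiag_mul]
  rw [show (fun k => (V k)ᴴ * Matrix.diagonal (fun i => ((μ k i : ℝ) : ℂ)) * V k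
        * ((V k)ᴴ * Matrix.diagonal (fun i => ((ν k i : ℝ) : ℂ)) * V k))
      = (fun k => (V k)ᴴ * Matrix.diagonal (fun i => (((fun k i => μ k i * ν k i) k i : ℝ) : ℂ)) * V k)
    from funext fun k => by
      have h1 : (V k)ᴴ * Matrix.diagonal (fun i => ((μ k i : ℝ) : ℂ)) * V k
          * ((V k)ᴴ * Matrix.diagonal (fun i => ((ν k i : ℝ) : ℂ)) * V k)
        = (V k)ᴴ * Matrix.diagonal (fun i => ((μ k i : ℝ) : ℂ)) * (V k * (V k)ᴴ)
          * (Matrix.diagonal (fun i => ((ν k i : ℝ) : ℂ)) * V k) := by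
        simp only [Matrix.mul_assoc]
      rw [h1, hV₁ k, Matrix.mul_one]
      have h2 : (V k)ᴴ * Matrix.diagonal (fun i => ((μ k i : ℝ) : ℂ))
          * (Matrix.diagonal (fun i => ((ν k i : ℝ) : ℂ)) * V k)
        = (V k)ᴴ * (Matrix.diagonal (fun i => ((μ k i : ℝ) : ℂ))
          * Matrix.diagonal (fun i => ((ν k i : ℝ) : ℂ))) * V k := by
        simp only [Matrix.mul_assoc]
      rw [h2, Matrix.diagonal_mul_diagonal]
      rw [show (fun i => ((μ k i : ℝ) : ℂ) * ((ν k i : ℝ) : ℂ))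
        = fun i => (((μ k i * ν k i : ℝ)) : ℂ) from funext fun i => by push_cast; ring]]

lemma sw_psd (N m : ℕ) (V : Fin N → Matrix (Fin m) (Fin m) ℂ) (μ : Fin N → Fin m → ℝ)
    (hμ : ∀ k i, 0 ≤ μ k i) : (sw N m V μ).PosSemidef := by
  set A : Fin N → Matrix (Fin m) (Fin m) ℂ :=
    fun k => Matrix.diagonal (fun i => ((Real.sqrt (μ k i) : ℝ) : ℂ)) * V k with hA
  have hblock : ∀ k, (V k)ᴴ * Matrix.diagonal (fun i => ((μ k i : ℝ) : ℂ)) * V k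
      = (A k)ᴴ * A k := by
    intro k
    rw [hA]
    rw [conjTranspose_mul, diagonal_conjTranspose]
    have hd : (star (fun i => ((Real.sqrt (μ k i) : ℝ) : ℂ))) =
        (fun i => ((Real.sqrt (μ k i) : ℝ) : ℂ)) := by
      funext i
      simp [Pi.star_apply]
    rw [hd]
    rw [show (V k)ᴴ * Matrix.diagonal (fun i => ((Real.sqrt (μ k i) : ℝ) : ℂ)) *
        (Matrix.diagonal (fun i => ((Real.sqrt (μ k i) : ℝ) : ℂ)) * V k)
      = (V k)ᴴ * (Matrix.diagonal (fun i => ((Real.sqrt (μ k i) : ℝ) : ℂ)) *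
        Matrix.diagonal (fun i => ((Real.sqrt (μ k i) : ℝ) : ℂ))) * V k from by
        simp only [Matrix.mul_assoc]]
    rw [Matrix.diagonal_mul_diagonal]
    rw [show (fun i => ((Real.sqrt (μ k i) : ℝ) : ℂ) * ((Real.sqrt (μ k i) : ℝ) : ℂ))
      = fun i => ((μ k i : ℝ) : ℂ) from funext fun i => by
        rw [← Complex.ofReal_mul, Real.mul_self_sqrt (hμ k i)]]
  have h2 : sw N m V μ = ((blockDiag N m A) * fourierBlk N m)ᴴ *
      ((blockDiag N m A) * fourierBlk N m) := by
    rw [conjTranspose_mul, _root_.blockDiag_conjTranspose]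
    unfold sw
    rw [show (fun k => (V k)ᴴ * Matrix.diagonal (fun i => ((μ k i : ℝ) : ℂ)) * V k)
      = fun k => (A k)ᴴ * A k from funext hblock]
    rw [← blockDiag_mul]
    simp only [Matrix.mul_assoc]
  rw [h2]
  exact posSemidef_conjTranspose_mul_self _

lemma frob_sq_eq {α : Type*} [Fintype α] [DecidableEq α] (M : Matrix α α ℂ) :
    ∑ i, ∑ j, ‖M i j‖ ^ 2 = ((Mᴴ * M).trace).re := by
  rw [Matrix.trace]
  rw [show ((∑ p, (Mᴴ * M).diag p).re) = ∑ p, ((Mᴴ * M) p p).re from by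
    rw [Complex.re_sum]; rfl]
  rw [Finset.sum_comm]
  refine Finset.sum_congr rfl (fun p _ => ?_)
  rw [mul_apply]
  rw [Complex.re_sum]
  refine Finset.sum_congr rfl (fun q _ => ?_)
  rw [conjTranspose_apply, Complex.sq_norm]
  rw [show (star (M q p) * M q p) = (starRingEnd ℂ) (M q p) * M q p from rfl]
  rw [mul_comm, Complex.mul_conj]
  simp [Complex.normSq_apply]

lemma psd_diag_nonneg {α : Type*} [Fintype α] [DecidableEq α] {M : Matrix α α ℂ}
    (h : M.PosSemidef) (p : α) : 0 ≤ M p p := by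
  exact h.diag_nonneg

lemma trace_psd_mul {α : Type*} [Fintype α] [DecidableEq α] {X D : Matrix α α ℂ}
    (hX : X.PosSemidef) (hD : D.PosSemidef) :
    0 ≤ ((X * D).trace).re ∧ ((X * D).trace).im = 0 := by
  obtain ⟨B, hB⟩ : ∃ B : Matrix α α ℂ, D = star B * B := by
    open scoped MatrixOrder Matrix.Norms.L2Operator in
    exact CStarAlgebra.nonneg_iff_eq_star_mul_self.mp hD.nonneg
  rw [Matrix.star_eq_conjTranspose] at hB
  have h1 : (X * D).trace = (B * X * Bᴴ).trace := by
    rw [hB, ← Matrix.mul_assoc, Matrix.trace_mul_cycle]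
  have h2 : (B * X * Bᴴ).PosSemidef := hX.mul_mul_conjTranspose_same B
  have h3 : 0 ≤ (B * X * Bᴴ).trace := by
    rw [Matrix.trace]
    exact Finset.sum_nonneg (fun p _ => psd_diag_nonneg h2 p)
  rw [h1]
  rw [Complex.le_def] at h3
  exact ⟨h3.1, h3.2.symm⟩

lemma sw_zero (N m : ℕ) (V : Fin N → Matrix (Fin m) (Fin m) ℂ) :
    sw N m V (fun _ _ => (0:ℝ)) = 0 := by
  unfold sw
  have h1 : (fun k => (V k)ᴴ * Matrix.diagonal (fun _ => (((0:ℝ)) : ℂ)) * V k)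
      = fun _ => (0 : Matrix (Fin m) (Fin m) ℂ) := by
    funext k
    simp
  rw [h1]
  have h2 : blockDiag N m (fun _ => (0 : Matrix (Fin m) (Fin m) ℂ)) = 0 := by
    ext ⟨a, i⟩ ⟨b, l⟩
    simp [_root_.blockDiag]
  rw [h2, Matrix.mul_zero, Matrix.zero_mul]

lemma frob_expand {α : Type*} [Fintype α] [DecidableEq α] (X P C : Matrix α α ℂ)
    (hX : X.PosSemidef) (hP : P.PosSemidef) (hD : (P - C).PosSemidef)
    (hPD : P * (P - C) = 0) (hDP : (P - C) * P = 0) :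
    ∑ i, ∑ j, ‖(X - C) i j‖ ^ 2
      = (∑ i, ∑ j, ‖(X - P) i j‖ ^ 2)
        + (∑ i, ∑ j, ‖(P - C) i j‖ ^ 2)
        + 2 * ((X * (P - C)).trace).re := by
  have hXC : X - C = (X - P) + (P - C) := by abel
  rw [frob_sq_eq, frob_sq_eq, frob_sq_eq, hXC]
  have hAH : (X - P)ᴴ = X - P := by rw [conjTranspose_sub, hX.1, hP.1]
  have hDH : (P - C)ᴴ = P - C := hD.1
  rw [conjTranspose_add, add_mul, mul_add, mul_add]
  have hAD : (X - P)ᴴ * (P - C) = X * (P - C) := by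
    rw [hAH, sub_mul, hPD, sub_zero]
  have hDA : (P - C)ᴴ * (X - P) = (P - C) * X := by
    rw [hDH, mul_sub, hDP, sub_zero]
  rw [hAD, hDA, hAH, hDH]
  rw [Matrix.trace_add, Matrix.trace_add, Matrix.trace_add]
  rw [Matrix.trace_mul_comm (P - C) X]
  simp only [Complex.add_re]
  have h1 : ((X - P) * (X - P)).trace.re = (((X - P)ᴴ * (X - P)).trace).re := by rw [hAH]
  have h2 : (((P - C)) * (P - C)).trace.re = (((P - C)ᴴ * (P - C)).trace).re := by rw [hDH]
  rw [h1, h2]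
  ring

/-- the Frobenius-norm projection onto the PSD cone of a symmetric
block-circulant matrix C = F* diag{C(ζ^0),...,C(ζ^{N-1})} F, where
C(ζ^k) = V_kᴴ diag(λ_k) V_k, is P = F* diag{P⁺(C(ζ^0)),...,P⁺(C(ζ^{N-1}))} F with
P⁺ truncating the negative eigenvalues to zero; moreover P is again
block-circulant. -/
theorem psd_projection_of_blockCirc_is_blockCirc
    (N m : ℕ) (hN : 0 < N)
    (S V : Fin N → Matrix (Fin m) (Fin m) ℂ) (lam : Fin N → Fin m → ℝ)
    (hV₁ : ∀ k, V k * (V k)ᴴ = 1) (hV₂ : ∀ k, (V k)ᴴ * V k = 1)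
    (hS : ∀ k, S k = (V k)ᴴ * Matrix.diagonal (fun i => ((lam k i : ℝ) : ℂ)) * V k)
    (C P : Matrix (Fin N × Fin m) (Fin N × Fin m) ℂ)
    (hC : C = (fourierBlk N m)ᴴ * blockDiag N m S * fourierBlk N m)
    (hsymm : Cᵀ = C)
    (hP : P = (fourierBlk N m)ᴴ *
      blockDiag N m
        (fun k => (V k)ᴴ * Matrix.diagonal (fun i => ((max (lam k i) 0 : ℝ) : ℂ)) * V k) *
      fourierBlk N m) :
    IsBlockCircMat N m P ∧ P.PosSemidef ∧
    (∀ X : Matrix (Fin N × Fin m) (Fin N × Fin m) ℂ, X.PosSemidef →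
      frobNorm (P - C) ≤ frobNorm (X - C)) ∧
    (∀ X : Matrix (Fin N × Fin m) (Fin N × Fin m) ℂ, X.PosSemidef →
      frobNorm (X - C) = frobNorm (P - C) → X = P) := by
  have hSfun : S = fun k => (V k)ᴴ * Matrix.diagonal (fun i => ((lam k i : ℝ) : ℂ)) * V k :=
    funext hS
  have hCsw : C = sw N m V lam := by rw [hC, hSfun]; rfl
  have hPsw : P = sw N m V (fun k i => max (lam k i) 0) := by rw [hP]; rfl
  -- block circulant
  have hcirc : IsBlockCircMat N m P := by
    refine ⟨fun c => fun i l => (1 / (N : ℂ)) * ∑ j : Fin N,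
      zetaN N ^ ((c.val : ℤ) * j.val) *
        ((V j)ᴴ * Matrix.diagonal (fun i => ((max (lam j i) 0 : ℝ) : ℂ)) * V j) i l, ?_⟩
    ext ⟨a, i⟩ ⟨b, l⟩
    rw [hP, conj_entry]
    show _ = (1 / (N : ℂ)) * ∑ j : Fin N, zetaN N ^ (((a - b : Fin N).val : ℤ) * j.val) * _
    congr 1
    refine Finset.sum_congr rfl (fun j _ => ?_)
    congr 1
    exact (zetaN_zpow_modEq N hN (((fin_sub_modEq N a b).mul_right j.val))).symm
  -- PSD
  have hPpsd : P.PosSemidef := by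
    rw [hPsw]
    exact sw_psd N m V _ (fun k i => le_max_right _ _)
  -- P - C
  have hPC : P - C = sw N m V (fun k i => max (lam k i) 0 - lam k i) := by
    rw [hPsw, hCsw, sw_sub]
  have hDpsd : (P - C).PosSemidef := by
    rw [hPC]
    exact sw_psd N m V _ (fun k i => sub_nonneg.mpr (le_max_left _ _))
  have hmul0 : ∀ x : ℝ, max x 0 * (max x 0 - x) = 0 := by
    intro x
    rcases le_total x 0 with h | h
    · simp [max_eq_right h]
    · simp [max_eq_left h]
  have hPD : P * (P - C) = 0 := by
    rw [hPC, hPsw, sw_mul N m hN V hV₁]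
    rw [show (fun k i => max (lam k i) 0 * (max (lam k i) 0 - lam k i)) = fun _ _ => (0:ℝ)
      from funext fun k => funext fun i => hmul0 (lam k i)]
    exact sw_zero N m V
  have hDP : (P - C) * P = 0 := by
    rw [hPC, hPsw, sw_mul N m hN V hV₁]
    rw [show (fun k i => (max (lam k i) 0 - lam k i) * max (lam k i) 0) = fun _ _ => (0:ℝ)
      from funext fun k => funext fun i => by rw [mul_comm]; exact hmul0 (lam k i)]
    exact sw_zero N m V
  have hfnonneg : ∀ M : Matrix (Fin N × Fin m) (Fin N × Fin m) ℂ,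
      0 ≤ ∑ i, ∑ j, ‖M i j‖ ^ 2 :=
    fun M => Finset.sum_nonneg fun _ _ => Finset.sum_nonneg fun _ _ => sq_nonneg _
  refine ⟨hcirc, hPpsd, ?_, ?_⟩
  · intro X hX
    have key := frob_expand X P C hX hPpsd hDpsd hPD hDP
    have ht := (trace_psd_mul hX hDpsd).1
    unfold frobNorm
    apply Real.sqrt_le_sqrt
    have := hfnonneg (X - P)
    linarith
  · intro X hX hEq
    have key := frob_expand X P C hX hPpsd hDpsd hPD hDP
    have ht := (trace_psd_mul hX hDpsd).1
    unfold frobNorm at hEq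
    have hfeq : ∑ i, ∑ j, ‖(X - C) i j‖ ^ 2
        = ∑ i, ∑ j, ‖(P - C) i j‖ ^ 2 :=
      (Real.sqrt_inj (hfnonneg _) (hfnonneg _)).mp hEq
    have hXP0 : ∑ i, ∑ j, ‖(X - P) i j‖ ^ 2 = 0 := by
      have := hfnonneg (X - P)
      linarith
    have hentry : ∀ p q, (X - P) p q = 0 := by
      intro p q
      have h1 : ∀ i ∈ (Finset.univ : Finset (Fin N × Fin m)),
          ∑ j, ‖(X - P) i j‖ ^ 2 = 0 := by
        rw [← Finset.sum_eq_zero_iff_of_nonneg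
          (fun i _ => Finset.sum_nonneg fun _ _ => sq_nonneg _)]
        exact hXP0
      have h2 := (Finset.sum_eq_zero_iff_of_nonneg
        (fun j _ => sq_nonneg (‖(X - P) p j‖))).mp (h1 p (Finset.mem_univ p)) q
        (Finset.mem_univ q)
      have h3 : ‖(X - P) p q‖ = 0 := by
        nlinarith [norm_nonneg ((X - P) p q)]
      exact norm_eq_zero.mp h3
    ext p q
    have h4 := hentry p q
    rw [Matrix.sub_apply] at h4
    exact sub_eq_zero.mp h4
end
end
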